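/- arXiv:1810.08762 — 2 statements merged into one kernel-verified Lean document; each statement's English description precedes it below -/
import Mathlib

section
/- Let G be a group with finite generating set S not containing the identity, and let T : G → G be an isometry from (G, d_C) to (G, d_W), i.e. d_W(T(g), T(h)) = d_C(g, h) for all g, h ∈ G. Then the map T̃ = L_{T(e)⁻¹} ∘ T (where e is the identity of G and L_a(h) = ah) satisfies: (i) T = L_{T(e)} ∘ T̃; (ii) T̃ is an isometry from (G, d_C) to (G, d_W) with T̃(e) = e; (iii) T̃(S) ⊆ S ∪ S⁻¹; and (iv) T̃ is nonexpansive on (G, d_W), i.e. d_W(T̃(g), T̃(h)) ≤ d_W(g, h) for all g, h ∈ G. -/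
/-- The cardinal norm of `g` with respect to a generating set `S`. -/
noncomputable def cardNorm {G : Type*} [Group G] (S : Set G) (g : G) : ℕ :=
  sInf {n : ℕ | ∃ A : Finset G, (A : Set G) ⊆ S ∧
    g ∈ Subgroup.closure (A : Set G) ∧ A.card = n}

/-- The word norm of `g` with respect to a generating set `S`: the least
length of an expression of `g` as a product of elements of `S ∪ S⁻¹`. -/
noncomputable def wordNorm {G : Type*} [Group G] (S : Set G) (g : G) : ℕ :=
  sInf {n : ℕ | ∃ l : List G, (∀ x ∈ l, x ∈ S ∨ x⁻¹ ∈ S) ∧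
    l.prod = g ∧ l.length = n}

/-- The cardinal metric `d_C(g, h) = ‖g⁻¹h‖`. -/
noncomputable def cardDist {G : Type*} [Group G] (S : Set G) (g h : G) : ℕ :=
  cardNorm S (g⁻¹ * h)

/-- The word metric `d_W(g, h)`. -/
noncomputable def wordDist {G : Type*} [Group G] (S : Set G) (g h : G) : ℕ :=
  wordNorm S (g⁻¹ * h)

lemma cardNorm_le_length {G : Type*} [Group G] (S : Set G) (l : List G)
    (hl : ∀ x ∈ l, x ∈ S ∨ x⁻¹ ∈ S) : cardNorm S l.prod ≤ l.length := by
  classical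
  set A : Finset G := l.toFinset.image (fun x => if x ∈ S then x else x⁻¹) with hA
  have hAS : (A : Set G) ⊆ S := by
    intro y hy
    simp only [hA, Finset.coe_image, Set.mem_image, Finset.mem_coe,
      List.mem_toFinset] at hy
    obtain ⟨x, hx, rfl⟩ := hy
    by_cases h : x ∈ S
    · simpa [h]
    · rcases hl x hx with h' | h'
      · exact absurd h' h
      · simpa [h]
  have hmem : l.prod ∈ Subgroup.closure (A : Set G) := by
    apply list_prod_mem
    intro x hx
    by_cases h : x ∈ S
    · refine Subgroup.subset_closure ?_
      simp only [hA, Finset.coe_image, Set.mem_image, Finset.mem_coe,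
        List.mem_toFinset]
      exact ⟨x, hx, by simp [h]⟩
    · have hxi : x⁻¹ ∈ (A : Set G) := by
        simp only [hA, Finset.coe_image, Set.mem_image, Finset.mem_coe,
          List.mem_toFinset]
        exact ⟨x, hx, by simp [h]⟩
      have := Subgroup.inv_mem _ (Subgroup.subset_closure hxi)
      simpa using this
  calc cardNorm S l.prod ≤ A.card := Nat.sInf_le ⟨A, hAS, hmem, rfl⟩
    _ ≤ l.toFinset.card := Finset.card_image_le
    _ ≤ l.length := l.toFinset_card_le

lemma cardNorm_le_wordNorm {G : Type*} [Group G] (S : Set G)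
    (hgen : Subgroup.closure S = ⊤) (g : G) : cardNorm S g ≤ wordNorm S g := by
  have hg : g ∈ (Subgroup.closure S).toSubmonoid := by rw [hgen]; trivial
  rw [Subgroup.closure_toSubmonoid] at hg
  obtain ⟨l, hl, hprod⟩ := Submonoid.exists_list_of_mem_closure hg
  have hl' : ∀ x ∈ l, x ∈ S ∨ x⁻¹ ∈ S := by
    intro x hx
    rcases hl x hx with h | h
    · exact Or.inl h
    · exact Or.inr (Set.mem_inv.1 h)
  have hne : {n : ℕ | ∃ l : List G, (∀ x ∈ l, x ∈ S ∨ x⁻¹ ∈ S) ∧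
      l.prod = g ∧ l.length = n}.Nonempty := ⟨l.length, l, hl', hprod, rfl⟩
  obtain ⟨m, hm, hprodm, hlen⟩ := Nat.sInf_mem hne
  rw [wordNorm, ← hlen, ← hprodm]
  exact cardNorm_le_length S m hm

lemma cardNorm_eq_one {G : Type*} [Group G] {S : Set G} (hid : (1 : G) ∉ S)
    {s : G} (hs : s ∈ S) : cardNorm S s = 1 := by
  classical
  have hmem1 : (1 : ℕ) ∈ {n : ℕ | ∃ A : Finset G, (A : Set G) ⊆ S ∧
      s ∈ Subgroup.closure (A : Set G) ∧ A.card = n} := by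
    refine ⟨{s}, by simpa using hs, Subgroup.subset_closure (by simp), by simp⟩
  refine le_antisymm (Nat.sInf_le hmem1) ?_
  rw [Nat.one_le_iff_ne_zero]
  intro h0
  rcases (Nat.sInf_eq_zero.1 h0) with h | h
  · obtain ⟨A, hAS, hmem, hcard⟩ := h
    rw [Finset.card_eq_zero] at hcard
    subst hcard
    simp only [Finset.coe_empty, Subgroup.closure_empty, Subgroup.mem_bot] at hmem
    exact hid (hmem ▸ hs)
  · exact absurd hmem1 (h ▸ not_false)

/-- Every isometry `T` from `(G, d_C)` to `(G, d_W)` factors as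
`T = L_{T(e)} ∘ T̃`, where `T̃ = L_{T(e)⁻¹} ∘ T` is an isometry from
`(G, d_C)` to `(G, d_W)` preserving the identity, `T̃(S) ⊆ S ∪ S⁻¹`, and
`T̃` is nonexpansive on `(G, d_W)`. -/
theorem isometry_cardDist_to_wordDist_factorization
    {G : Type*} [Group G] (S : Set G)
    (hgen : Subgroup.closure S = ⊤) (hid : (1 : G) ∉ S) (hS : S.Finite)
    (T : G → G) (hT : ∀ g h : G, wordDist S (T g) (T h) = cardDist S g h) :
    (∀ g : G, T g = T 1 * ((T 1)⁻¹ * T g)) ∧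
    (T 1)⁻¹ * T 1 = 1 ∧
    (∀ g h : G,
      wordDist S ((T 1)⁻¹ * T g) ((T 1)⁻¹ * T h) = cardDist S g h) ∧
    (∀ s ∈ S, (T 1)⁻¹ * T s ∈ S ∪ S⁻¹) ∧
    (∀ g h : G,
      wordDist S ((T 1)⁻¹ * T g) ((T 1)⁻¹ * T h) ≤ wordDist S g h) := by
  have hdist : ∀ g h : G,
      wordDist S ((T 1)⁻¹ * T g) ((T 1)⁻¹ * T h) = cardDist S g h := by
    intro g h
    have : ((T 1)⁻¹ * T g)⁻¹ * ((T 1)⁻¹ * T h) = (T g)⁻¹ * T h := by group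
    rw [wordDist, this, ← wordDist, hT]
  refine ⟨fun g => by group, by group, hdist, ?_, ?_⟩
  · intro s hs
    have h1 : wordNorm S ((T 1)⁻¹ * T s) = 1 := by
      have := hdist 1 s
      rwa [wordDist, mul_inv_rev, inv_inv, mul_assoc, inv_mul_cancel_left,
        cardDist, inv_one, one_mul, cardNorm_eq_one hid hs] at this
    have hne : {n : ℕ | ∃ l : List G, (∀ x ∈ l, x ∈ S ∨ x⁻¹ ∈ S) ∧
        l.prod = (T 1)⁻¹ * T s ∧ l.length = n}.Nonempty := by
      by_contra h
      rw [Set.not_nonempty_iff_eq_empty] at h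
      rw [wordNorm, h] at h1
      simp at h1
    obtain ⟨l, hl, hprod, hlen⟩ := Nat.sInf_mem hne
    rw [wordNorm] at h1
    rw [h1] at hlen
    match l, hlen with
    | [x], _ =>
      simp only [List.prod_cons, List.prod_nil, mul_one] at hprod
      rcases hl x (by simp) with h | h
      · exact Or.inl (hprod ▸ h)
      · exact Or.inr (Set.mem_inv.2 (hprod ▸ h))
  · intro g h
    rw [hdist g h, cardDist, wordDist]
    exact cardNorm_le_wordNorm S hgen _
end

section
/- Let G be a group and S a generating set of G with the identity not in S. Suppose α : G → G is a bijection and σ is a permutation of S such that α(gc) = α(g)σ(c) for all g ∈ G and c ∈ S (i.e., α is a color-permuting automorphism of the Cayley color digraph of G with respect to S). Then α is an isometry of G with respect to the cardinal metric: d_C(α(g), α(h)) = d_C(g, h) for all g, h ∈ G. -/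
/-- Every element of a closure lies in the closure of a finite subset. -/
lemma exists_finset_mem_closure {G : Type*} [Group G] {S : Set G} {x : G}
    (hx : x ∈ Subgroup.closure S) :
    ∃ A : Finset G, (A : Set G) ⊆ S ∧ x ∈ Subgroup.closure (A : Set G) := by
  classical
  refine Subgroup.closure_induction (fun y hy => ?_) ?_ ?_ ?_ hx
  · exact ⟨{y}, by simpa using hy, Subgroup.subset_closure (by simp)⟩
  · exact ⟨∅, by simp, by simp⟩
  · rintro a b _ _ ⟨A, hA, ha⟩ ⟨B, hB, hb⟩
    refine ⟨A ∪ B, ?_, Subgroup.mul_mem _ ?_ ?_⟩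
    · push_cast; exact Set.union_subset hA hB
    · exact Subgroup.closure_mono (by push_cast; exact Set.subset_union_left) ha
    · exact Subgroup.closure_mono (by push_cast; exact Set.subset_union_right) hb
  · rintro a _ ⟨A, hA, ha⟩
    exact ⟨A, hA, Subgroup.inv_mem _ ha⟩

lemma cardDist_apply_le {G : Type*} [Group G] (S : Set G)
    (hgen : Subgroup.closure S = ⊤)
    (α : G → G) (σ : S ≃ S)
    (hperm : ∀ (g : G) (c : S), α (g * c) = α g * (σ c : G)) :
    ∀ g h : G, cardDist S (α g) (α h) ≤ cardDist S g h := by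
  intro g h
  have hne : {n : ℕ | ∃ A : Finset G, (A : Set G) ⊆ S ∧
      g⁻¹ * h ∈ Subgroup.closure (A : Set G) ∧ A.card = n}.Nonempty := by
    obtain ⟨A, hAS, hmem⟩ := exists_finset_mem_closure
      (S := S) (x := g⁻¹ * h) (by rw [hgen]; trivial)
    exact ⟨A.card, A, hAS, hmem, rfl⟩
  obtain ⟨A, hAS, hmem, hcard⟩ : ∃ A : Finset G, (A : Set G) ⊆ S ∧
      g⁻¹ * h ∈ Subgroup.closure (A : Set G) ∧ A.card = cardDist S g h :=
    Nat.sInf_mem hne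
  -- the image of A under σ
  classical
  set B : Finset G := A.attach.image (fun a => (σ ⟨a.1, hAS a.2⟩ : G)) with hB
  have hBS : (B : Set G) ⊆ S := by
    intro x hx
    simp only [hB, Finset.coe_image, Set.mem_image] at hx
    obtain ⟨a, _, rfl⟩ := hx
    exact (σ ⟨a.1, hAS a.2⟩).2
  have key : ∀ w ∈ Subgroup.closure (A : Set G), ∀ x : G,
      (α x)⁻¹ * α (x * w) ∈ Subgroup.closure (B : Set G) := by
    intro w hw
    refine Subgroup.closure_induction (fun c hc x => ?_) (fun x => ?_) ?_ ?_ hw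
    · rw [hperm x ⟨c, hAS hc⟩, inv_mul_cancel_left]
      refine Subgroup.subset_closure ?_
      simp only [hB, Finset.coe_image, Set.mem_image]
      exact ⟨⟨c, hc⟩, by simp, rfl⟩
    · simpa using Subgroup.one_mem _
    · intro a b _ _ iha ihb x
      have : (α x)⁻¹ * α (x * (a * b)) =
          ((α x)⁻¹ * α (x * a)) * ((α (x * a))⁻¹ * α ((x * a) * b)) := by
        group
      rw [this]
      exact Subgroup.mul_mem _ (iha x) (ihb (x * a))
    · intro a _ iha x
      have h2 := iha (x * a⁻¹)
      rw [inv_mul_cancel_right] at h2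
      have : (α x)⁻¹ * α (x * a⁻¹) = ((α (x * a⁻¹))⁻¹ * α x)⁻¹ := by group
      rw [this]
      exact Subgroup.inv_mem _ h2
  have hmem' : (α g)⁻¹ * α h ∈ Subgroup.closure (B : Set G) := by
    have := key _ hmem g
    rwa [mul_inv_cancel_left] at this
  calc cardDist S (α g) (α h) ≤ B.card :=
        Nat.sInf_le ⟨B, hBS, hmem', rfl⟩
    _ ≤ A.card := by
        simpa using Finset.card_image_le (s := A.attach)
          (f := fun a => (σ ⟨a.1, hAS a.2⟩ : G))
    _ = cardDist S g h := hcard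

/-- Color-permuting automorphisms of the Cayley color digraph of `(G, S)` are
isometries of `G` with respect to the cardinal metric. -/
theorem color_permuting_aut_isometry_cardDist {G : Type*} [Group G] (S : Set G)
    (hgen : Subgroup.closure S = ⊤) (hid : (1 : G) ∉ S)
    (α : G → G) (hα : Function.Bijective α) (σ : S ≃ S)
    (hperm : ∀ (g : G) (c : S), α (g * c) = α g * (σ c : G)) :
    ∀ g h : G, cardDist S (α g) (α h) = cardDist S g h := by
  intro g h
  set e := Equiv.ofBijective α hα with he
  have hβ : ∀ (x : G) (c : S), e.symm (x * c) = e.symm x * (σ.symm c : G) := by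
    intro x c
    apply hα.injective
    have h1 : α (e.symm x * (σ.symm c : G)) = α (e.symm x) * (σ (σ.symm c) : G) :=
      hperm _ _
    have h2 : ∀ y, α (e.symm y) = y := fun y => e.apply_symm_apply y
    rw [h1, h2, h2, Equiv.apply_symm_apply]
  refine le_antisymm (cardDist_apply_le S hgen α σ hperm g h) ?_
  have := cardDist_apply_le S hgen e.symm σ.symm hβ (α g) (α h)
  have hag : e.symm (α g) = g := e.symm_apply_apply g
  have hah : e.symm (α h) = h := e.symm_apply_apply h
  rwa [hag, hah] at this
end
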